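/- For all x ∈ [0, 1.5], one has |tanh(x)/x − (1 − 0.2·x²)| ≤ 0.15·x², where tanh(x)/x is interpreted as 1 at x = 0. -/

import Mathlib

open Real

lemma aux_nonneg {f f' : ℝ → ℝ} (hder : ∀ y, HasDerivAt f (f' y) y) (h0 : 0 ≤ f 0)
    (hd : ∀ y, 0 ≤ y → 0 ≤ f' y) {y : ℝ} (hy : 0 ≤ y) : 0 ≤ f y := by
  have hmono : MonotoneOn f (Set.Ici (0:ℝ)) := by
    apply monotoneOn_of_deriv_nonneg (convex_Ici 0)
    · exact fun z _ => (hder z).continuousAt.continuousWithinAt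
    · exact fun z _ => (hder z).differentiableAt.differentiableWithinAt
    · intro z hz
      rw [interior_Ici] at hz
      rw [(hder z).deriv]
      exact hd z hz.le
  calc (0:ℝ) ≤ f 0 := h0
    _ ≤ f y := hmono Set.self_mem_Ici hy hy

lemma exp_neg_ge (y : ℝ) (hy : 0 ≤ y) :
    1 - y + y^2/2 - y^3/6 + y^4/24 - y^5/120 ≤ Real.exp (-y) := by
  have hexp : ∀ z : ℝ, HasDerivAt (fun t : ℝ => Real.exp (-t)) (Real.exp (-z) * (-1)) z :=
    fun z => (hasDerivAt_neg z).exp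
  have h1 : ∀ z : ℝ, 0 ≤ z → 0 ≤ Real.exp (-z) - (1 - z) := by
    intro z hz
    nlinarith [Real.add_one_le_exp (-z)]
  have h2 : ∀ z : ℝ, 0 ≤ z → 0 ≤ (1 - z + z^2/2) - Real.exp (-z) := by
    intro z hz
    refine aux_nonneg (f := fun t : ℝ => (1 - t + t^2/2) - Real.exp (-t))
      (f' := fun t : ℝ => (-1 + t) - Real.exp (-t) * (-1)) (fun w => ?_) (by norm_num)
      (fun w hw => by have := h1 w hw; nlinarith) hz
    have hp : HasDerivAt (fun t : ℝ => 1 - t + t^2/2) (-1 + w) w := by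
      have := (((hasDerivAt_const w (1:ℝ)).sub (hasDerivAt_id' w)).add ((hasDerivAt_pow 2 w).div_const 2))
      refine this.congr_deriv ?_
      push_cast; ring
    exact hp.sub (hexp w)
  have h3 : ∀ z : ℝ, 0 ≤ z → 0 ≤ Real.exp (-z) - (1 - z + z^2/2 - z^3/6) := by
    intro z hz
    refine aux_nonneg (f := fun t : ℝ => Real.exp (-t) - (1 - t + t^2/2 - t^3/6))
      (f' := fun t : ℝ => Real.exp (-t) * (-1) - (-1 + t - t^2/2)) (fun w => ?_) (by norm_num)
      (fun w hw => by have := h2 w hw; nlinarith) hz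
    have hp : HasDerivAt (fun t : ℝ => 1 - t + t^2/2 - t^3/6) (-1 + w - w^2/2) w := by
      have := ((((hasDerivAt_const w (1:ℝ)).sub (hasDerivAt_id' w)).add
        ((hasDerivAt_pow 2 w).div_const 2)).sub ((hasDerivAt_pow 3 w).div_const 6))
      refine this.congr_deriv ?_
      push_cast; ring
    exact (hexp w).sub hp
  have h4 : ∀ z : ℝ, 0 ≤ z → 0 ≤ (1 - z + z^2/2 - z^3/6 + z^4/24) - Real.exp (-z) := by
    intro z hz
    refine aux_nonneg (f := fun t : ℝ => (1 - t + t^2/2 - t^3/6 + t^4/24) - Real.exp (-t))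
      (f' := fun t : ℝ => (-1 + t - t^2/2 + t^3/6) - Real.exp (-t) * (-1)) (fun w => ?_) (by norm_num)
      (fun w hw => by have := h3 w hw; nlinarith) hz
    have hp : HasDerivAt (fun t : ℝ => 1 - t + t^2/2 - t^3/6 + t^4/24) (-1 + w - w^2/2 + w^3/6) w := by
      have := (((((hasDerivAt_const w (1:ℝ)).sub (hasDerivAt_id' w)).add
        ((hasDerivAt_pow 2 w).div_const 2)).sub ((hasDerivAt_pow 3 w).div_const 6)).add
        ((hasDerivAt_pow 4 w).div_const 24))
      refine this.congr_deriv ?_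
      push_cast; ring
    exact hp.sub (hexp w)
  have h5 : 0 ≤ Real.exp (-y) - (1 - y + y^2/2 - y^3/6 + y^4/24 - y^5/120) := by
    refine aux_nonneg (f := fun t : ℝ => Real.exp (-t) - (1 - t + t^2/2 - t^3/6 + t^4/24 - t^5/120))
      (f' := fun t : ℝ => Real.exp (-t) * (-1) - (-1 + t - t^2/2 + t^3/6 - t^4/24)) (fun w => ?_) (by norm_num)
      (fun w hw => by have := h4 w hw; nlinarith) hy
    have hp : HasDerivAt (fun t : ℝ => 1 - t + t^2/2 - t^3/6 + t^4/24 - t^5/120)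
        (-1 + w - w^2/2 + w^3/6 - w^4/24) w := by
      have := ((((((hasDerivAt_const w (1:ℝ)).sub (hasDerivAt_id' w)).add
        ((hasDerivAt_pow 2 w).div_const 2)).sub ((hasDerivAt_pow 3 w).div_const 6)).add
        ((hasDerivAt_pow 4 w).div_const 24)).sub ((hasDerivAt_pow 5 w).div_const 120))
      refine this.congr_deriv ?_
      push_cast; ring
    exact (hexp w).sub hp
  linarith

lemma tanh_lower (x : ℝ) (hx0 : 0 ≤ x) (hx1 : x ≤ 1.5) :
    x - 0.35*x^3 ≤ Real.tanh x := by
  have hE := Real.exp_pos x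
  have hsum : 1 + 2*x + 2*x^2 + (4/3)*x^3 + (2/3)*x^4 + (4/15)*x^5 ≤ Real.exp x * Real.exp x := by
    have h := Real.sum_le_exp_of_nonneg (by linarith : (0:ℝ) ≤ 2*x) 6
    simp [Finset.sum_range_succ, Nat.factorial] at h
    have h2x : (2:ℝ)*x = x + x := two_mul x
    rw [h2x, Real.exp_add] at h
    nlinarith [h]
  have key : 1 + (x - 0.35*x^3) ≤ (1 - (x - 0.35*x^3)) * (Real.exp x * Real.exp x) := by
    have hp1 : (0:ℝ) < 1 - (x - 0.35*x^3) := by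
      nlinarith [mul_nonneg hx0 (sq_nonneg (x-1)), sq_nonneg (x - 27/28)]
    have h2 : (1 - (x - 0.35*x^3)) * (1 + 2*x + 2*x^2 + (4/3)*x^3 + (2/3)*x^4 + (4/15)*x^5)
        ≤ (1 - (x - 0.35*x^3)) * (Real.exp x * Real.exp x) :=
      mul_le_mul_of_nonneg_left hsum hp1.le
    nlinarith [mul_nonneg hx0 hx0, mul_nonneg (mul_nonneg hx0 hx0) hx0, sq_nonneg (x-1),
      mul_nonneg (mul_nonneg hx0 hx0) (sub_nonneg.2 hx1), mul_nonneg hx0 (sub_nonneg.2 hx1),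
      sq_nonneg (x*(x-1)), mul_nonneg (mul_nonneg (mul_nonneg hx0 hx0) hx0) (sub_nonneg.2 hx1)]
  rw [Real.tanh_eq_sinh_div_cosh, le_div_iff₀ (Real.cosh_pos x)]
  rw [Real.sinh_eq, Real.cosh_eq]
  have expand : (Real.exp x - Real.exp (-x))/2 - (x - 0.35*x^3) * ((Real.exp x + Real.exp (-x))/2)
      = ((1 - (x - 0.35*x^3)) * (Real.exp x * Real.exp x) - (1 + (x - 0.35*x^3))) * Real.exp (-x) / 2 := by
    rw [Real.exp_neg]
    field_simp
    ring
  nlinarith [mul_nonneg (sub_nonneg.2 key) (Real.exp_pos (-x)).le, expand]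

lemma tanh_upper (x : ℝ) (hx0 : 0 ≤ x) (hx1 : x ≤ 1.5) :
    Real.tanh x ≤ x - 0.05*x^3 := by
  have hE := Real.exp_pos x
  have key : (1 - (x - 0.05*x^3)) * (Real.exp x * Real.exp x) ≤ 1 + (x - 0.05*x^3) := by
    rcases le_or_gt 1 (x - 0.05*x^3) with hq | hq
    · have hq0 : (0:ℝ) ≤ x - 0.05*x^3 := by nlinarith [mul_nonneg hx0 hx0]
      nlinarith [mul_pos hE hE]
    · have hP := exp_neg_ge (2*x) (by linarith)
      have hprod : Real.exp x * Real.exp x * Real.exp (-(2*x)) = 1 := by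
        rw [← Real.exp_add, ← Real.exp_add]
        have h0 : x + x + -(2*x) = 0 := by ring
        rw [h0, Real.exp_zero]
      have h2 : Real.exp x * Real.exp x *
          (1 - 2*x + (2*x)^2/2 - (2*x)^3/6 + (2*x)^4/24 - (2*x)^5/120) ≤ 1 := by
        calc Real.exp x * Real.exp x * (1 - 2*x + (2*x)^2/2 - (2*x)^3/6 + (2*x)^4/24 - (2*x)^5/120)
            ≤ Real.exp x * Real.exp x * Real.exp (-(2*x)) :=
              mul_le_mul_of_nonneg_left hP (by positivity)
          _ = 1 := hprod
      have h106 : x ≤ 1.06 := by nlinarith [mul_nonneg hx0 hx0, sq_nonneg (x-1.06)]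
      have hpoly : 1 - (x - 0.05*x^3) ≤ (1 + (x - 0.05*x^3)) *
          (1 - 2*x + (2*x)^2/2 - (2*x)^3/6 + (2*x)^4/24 - (2*x)^5/120) := by
        nlinarith [mul_nonneg hx0 hx0, mul_nonneg (mul_nonneg hx0 hx0) hx0, sq_nonneg (x-1),
          mul_nonneg (mul_nonneg hx0 hx0) (sub_nonneg.2 h106), mul_nonneg hx0 (sub_nonneg.2 h106),
          sq_nonneg (x*(x-1)), mul_nonneg (mul_nonneg (mul_nonneg hx0 hx0) hx0) (sub_nonneg.2 h106)]
      have hq1 : (0:ℝ) ≤ 1 + (x - 0.05*x^3) := by nlinarith [mul_nonneg hx0 hx0]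
      nlinarith [mul_le_mul_of_nonneg_left hpoly (mul_pos hE hE).le, h2, hq1]
  rw [Real.tanh_eq_sinh_div_cosh, div_le_iff₀ (Real.cosh_pos x)]
  rw [Real.sinh_eq, Real.cosh_eq]
  have expand : (x - 0.05*x^3) * ((Real.exp x + Real.exp (-x))/2) - (Real.exp x - Real.exp (-x))/2
      = ((1 + (x - 0.05*x^3)) - (1 - (x - 0.05*x^3)) * (Real.exp x * Real.exp x)) * Real.exp (-x) / 2 := by
    rw [Real.exp_neg]
    field_simp
    ring
  nlinarith [mul_nonneg (sub_nonneg.2 key) (Real.exp_pos (-x)).le, expand]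

theorem tanh_div_self_approx (x : ℝ) (hx : x ∈ Set.Icc (0:ℝ) 1.5) :
    |(if x = 0 then 1 else Real.tanh x / x) - (1 - 0.2 * x ^ 2)| ≤ 0.15 * x ^ 2 := by
  obtain ⟨hx0, hx1⟩ := hx
  by_cases hxz : x = 0
  · simp [hxz]
  · have hxpos : 0 < x := hx0.lt_of_ne (Ne.symm hxz)
    rw [if_neg hxz, abs_le]
    have hlo := tanh_lower x hx0 hx1
    have hhi := tanh_upper x hx0 hx1
    have hlo' : 1 - 0.35*x^2 ≤ Real.tanh x / x := by
      rw [le_div_iff₀ hxpos]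
      nlinarith [hlo]
    have hhi' : Real.tanh x / x ≤ 1 - 0.05*x^2 := by
      rw [div_le_iff₀ hxpos]
      nlinarith [hhi]
    constructor <;> nlinarith [hlo', hhi']
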